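/- Let A ∈ ℝ^{m×n}, let s, ε ∈ (0,1), and let T ⊆ {1,…,m} with |T| = s·m. Suppose that (a) for all x, y ∈ ℝ^n, (1/m)·‖|Ax| − |Ay|‖₁ ≤ √(2/π)·(1+ε)·min{‖x+y‖, ‖x−y‖}, and (b) for all x, y ∈ ℝ^n, (1/((1−s)·m))·‖(|Ax| − |Ay|)_{T^c}‖₁ ≥ √(2/π)·(2−√2)·(1−ε)·min{‖x+y‖, ‖x−y‖}. Then for all x, y ∈ ℝ^n, ‖(|Ax| − |Ay|)_T‖₁ ≤ ψ·‖(|Ax| − |Ay|)_{T^c}‖₁, where ψ := ((1+ε) − (2−√2)·(1−ε)·(1−s)) / ((2−√2)·(1−ε)·(1−s)). -/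

import Mathlib

open Finset

theorem stmt_17 (m n : ℕ) (A : Fin m → Fin n → ℝ) (s ε : ℝ)
    (hs : s ∈ Set.Ioo (0:ℝ) 1) (hε : ε ∈ Set.Ioo (0:ℝ) 1)
    (T : Finset (Fin m)) (hT : (T.card : ℝ) = s * m)
    (ha : ∀ x y : EuclideanSpace ℝ (Fin n),
      (1 / m) * ∑ i, |abs (∑ j, A i j * x j) - abs (∑ j, A i j * y j)| ≤
        Real.sqrt (2 / Real.pi) * (1 + ε) * min ‖x + y‖ ‖x - y‖)
    (hb : ∀ x y : EuclideanSpace ℝ (Fin n),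
      (1 / ((1 - s) * m)) * ∑ i ∈ Tᶜ, |abs (∑ j, A i j * x j) - abs (∑ j, A i j * y j)| ≥
        Real.sqrt (2 / Real.pi) * (2 - Real.sqrt 2) * (1 - ε) * min ‖x + y‖ ‖x - y‖) :
    ∀ x y : EuclideanSpace ℝ (Fin n),
      ∑ i ∈ T, |abs (∑ j, A i j * x j) - abs (∑ j, A i j * y j)| ≤
        (((1 + ε) - (2 - Real.sqrt 2) * (1 - ε) * (1 - s)) /
            ((2 - Real.sqrt 2) * (1 - ε) * (1 - s))) *
          ∑ i ∈ Tᶜ, |abs (∑ j, A i j * x j) - abs (∑ j, A i j * y j)| := by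
  intro x y
  obtain ⟨hs0, hs1⟩ := hs
  obtain ⟨hε0, hε1⟩ := hε
  have hsqrt2 : Real.sqrt 2 < 2 := by
    nlinarith [Real.sq_sqrt (by norm_num : (0:ℝ) ≤ 2), Real.sqrt_nonneg 2]
  have hD : (0:ℝ) < (2 - Real.sqrt 2) * (1 - ε) * (1 - s) := by
    apply mul_pos (mul_pos (by linarith) (by linarith)) (by linarith)
  rcases Nat.eq_zero_or_pos m with hm | hm
  · subst hm
    have hTe : T = ∅ := Finset.eq_empty_of_isEmpty T
    have hTc : Tᶜ = (∅ : Finset (Fin 0)) := Finset.eq_empty_of_isEmpty _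
    simp [hTe, hTc]
  have hm' : (0:ℝ) < m := by exact_mod_cast hm
  set f : Fin m → ℝ := fun i => |abs (∑ j, A i j * x j) - abs (∑ j, A i j * y j)| with hf
  set C := Real.sqrt (2 / Real.pi) with hC
  set M := min ‖x + y‖ ‖x - y‖ with hM
  have hCM : 0 ≤ C * M := mul_nonneg (Real.sqrt_nonneg _)
    (le_min (norm_nonneg _) (norm_nonneg _))
  have hsum : ∑ i ∈ T, f i + ∑ i ∈ Tᶜ, f i = ∑ i, f i := Finset.sum_add_sum_compl T f
  have h1 : ∑ i, f i ≤ (m : ℝ) * (C * (1 + ε) * M) := by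
    have := ha x y
    rw [one_div, inv_mul_le_iff₀ hm'] at this
    linarith [this]
  have h2 : ((1 - s) * m) * (C * (2 - Real.sqrt 2) * (1 - ε) * M) ≤ ∑ i ∈ Tᶜ, f i := by
    have := hb x y
    have hpos : (0:ℝ) < (1 - s) * m := mul_pos (by linarith) hm'
    rw [ge_iff_le, one_div] at this
    have h := (le_inv_mul_iff₀ hpos).mp this
    linarith [h]
  have hSCnn : (0:ℝ) ≤ ∑ i ∈ Tᶜ, f i :=
    Finset.sum_nonneg fun i _ => abs_nonneg _
  rw [div_mul_eq_mul_div, le_div_iff₀ hD]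
  nlinarith [h1, h2, hsum, mul_nonneg hCM hm'.le, hD,
    mul_le_mul_of_nonneg_left h2 (by linarith : (0:ℝ) ≤ 1 + ε)]
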